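/- With the notation of the previous statement, the three identities hold pointwise: 𝓛_-(cn·dn) = -4k² cn·dn·sn², 𝓛_-(sn·E(·,k)) = -2 cn·dn·(1 - 2k² sn²), and 𝓛_-(ξ·sn) = -2 cn·dn, where 𝓛_- = -∂_ξ² - (1+k²) + 2k² sn². -/

import Mathlib

/-- The operator `𝓛₋ = -∂_ξ² - (1+k²) + 2k² sn²`. -/
noncomputable def Lm14 (k : ℝ) (sn g : ℝ → ℝ) : ℝ → ℝ :=
  fun ξ => -(deriv (deriv g) ξ) + (-(1+k^2) + 2*k^2*(sn ξ)^2) * g ξ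

theorem stmt14 (k : ℝ) (hk : k ∈ Set.Ioo (0:ℝ) 1)
    (sn cn dn : ℝ → ℝ)
    (hsn : ∀ ξ : ℝ, HasDerivAt sn (cn ξ * dn ξ) ξ)
    (hcn : ∀ ξ : ℝ, HasDerivAt cn (-(sn ξ * dn ξ)) ξ)
    (hdn : ∀ ξ : ℝ, HasDerivAt dn (-(k^2 * sn ξ * cn ξ)) ξ)
    (hsn0 : sn 0 = 0) (hcn0 : cn 0 = 1) (hdn0 : dn 0 = 1)
    (hdn2 : ∀ ξ : ℝ, (dn ξ)^2 = 1 - k^2*(sn ξ)^2)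
    (hcn2 : ∀ ξ : ℝ, (cn ξ)^2 = 1 - (sn ξ)^2) :
    (∀ ξ : ℝ, Lm14 k sn (fun t => cn t * dn t) ξ
        = -4*k^2 * (cn ξ * dn ξ * (sn ξ)^2)) ∧
    (∀ ξ : ℝ, Lm14 k sn (fun t => sn t * ∫ y in (0:ℝ)..t, (dn y)^2) ξ
        = -2 * (cn ξ * dn ξ) * (1 - 2*k^2*(sn ξ)^2)) ∧
    (∀ ξ : ℝ, Lm14 k sn (fun t => t * sn t) ξ = -2 * (cn ξ * dn ξ)) := by
  have hdnC : Continuous (fun y => (dn y)^2) :=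
    ((Differentiable.continuous (fun y => (hdn y).differentiableAt))).pow 2
  have hE : ∀ ξ : ℝ, HasDerivAt (fun t => ∫ y in (0:ℝ)..t, (dn y)^2) ((dn ξ)^2) ξ := by
    intro ξ
    exact intervalIntegral.integral_hasDerivAt_right
      (hdnC.intervalIntegrable 0 ξ)
      (hdnC.stronglyMeasurable.stronglyMeasurableAtFilter)
      hdnC.continuousAt
  refine ⟨?_, ?_, ?_⟩
  · intro ξ
    have h1 : deriv (fun t => cn t * dn t)
        = fun t => -(sn t * dn t) * dn t + cn t * -(k^2 * sn t * cn t) :=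
      funext fun t => ((hcn t).mul (hdn t)).deriv
    have h2 := ((((hsn ξ).mul (hdn ξ)).neg.mul (hdn ξ)).add
      ((hcn ξ).mul (((hsn ξ).const_mul (k^2)).mul (hcn ξ)).neg)).deriv
    simp only [Pi.mul_apply, Pi.neg_apply, Pi.add_apply, Pi.pow_apply, id_eq] at h2
    simp only [Lm14]
    rw [h1, show deriv (fun t => -(sn t * dn t) * dn t + cn t * -(k^2 * sn t * cn t)) ξ = _ from h2]
    linear_combination (cn ξ * dn ξ) * hdn2 ξ + k^2 * (cn ξ * dn ξ) * hcn2 ξ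
  · intro ξ
    have h1 : deriv (fun t => sn t * ∫ y in (0:ℝ)..t, (dn y)^2)
        = fun t => cn t * dn t * (∫ y in (0:ℝ)..t, (dn y)^2) + sn t * (dn t)^2 :=
      funext fun t => ((hsn t).mul (hE t)).deriv
    have h2 := ((((hcn ξ).mul (hdn ξ)).mul (hE ξ)).add
      ((hsn ξ).mul ((hdn ξ).pow 2))).deriv
    simp only [Pi.mul_apply, Pi.neg_apply, Pi.add_apply, Pi.pow_apply, id_eq] at h2
    simp only [Lm14]
    rw [h1, show deriv (fun t => cn t * dn t * (∫ y in (0:ℝ)..t, (dn y)^2) + sn t * (dn t)^2) ξ = _ from h2]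
    linear_combination (sn ξ * (∫ y in (0:ℝ)..ξ, (dn y)^2) - 2*cn ξ*dn ξ) * hdn2 ξ
      + k^2 * sn ξ * (∫ y in (0:ℝ)..ξ, (dn y)^2) * hcn2 ξ
  · intro ξ
    have h1 : deriv (fun t => t * sn t)
        = fun t => 1 * sn t + t * (cn t * dn t) :=
      funext fun t => ((hasDerivAt_id t).mul (hsn t)).deriv
    have h2 := (((hsn ξ).const_mul 1).add
      ((hasDerivAt_id ξ).mul ((hcn ξ).mul (hdn ξ)))).deriv
    simp only [id_eq] at h2
    simp only [Pi.mul_apply, Pi.neg_apply, Pi.add_apply, Pi.pow_apply, id_eq] at h2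
    simp only [Lm14]
    rw [h1, show deriv (fun t => 1 * sn t + t * (cn t * dn t)) ξ = _ from h2]
    linear_combination ξ * sn ξ * hdn2 ξ + k^2 * ξ * sn ξ * hcn2 ξ
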